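/- Let Φ be a symmetric gauge function on ℝ^d and let p ≥ 1. Then the ℓp-transformation Φ^(p)(x) := (Φ(|x₁|^p, …, |x_d|^p))^{1/p} is also a symmetric gauge function; in particular, it satisfies the triangle inequality. -/

import Mathlib

/-- A symmetric gauge function on `ℝ^d`: a norm invariant under coordinate
permutations and sign changes of individual coordinates. -/
def IsSymmetricGauge {d : ℕ} (Φ : (Fin d → ℝ) → ℝ) : Prop :=
  (∀ x, 0 ≤ Φ x) ∧
  (∀ x, Φ x = 0 ↔ x = 0) ∧
  (∀ (a : ℝ) (x : Fin d → ℝ), Φ (a • x) = |a| * Φ x) ∧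
  (∀ x y : Fin d → ℝ, Φ (x + y) ≤ Φ x + Φ y) ∧
  (∀ (σ : Equiv.Perm (Fin d)) (x : Fin d → ℝ), Φ (x ∘ σ) = Φ x) ∧
  (∀ (ε : Fin d → ℝ), (∀ i, ε i = 1 ∨ ε i = -1) →
    ∀ x : Fin d → ℝ, Φ (fun i => ε i * x i) = Φ x)


lemma sg_update {d : ℕ} {Φ : (Fin d → ℝ) → ℝ} (hΦ : IsSymmetricGauge Φ)
    (w : Fin d → ℝ) (i : Fin d) (t : ℝ) (ht : 0 ≤ t) (htw : t ≤ w i) :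
    Φ (Function.update w i t) ≤ Φ w := by
  obtain ⟨hpos, hzero, hsmul, htri, hperm, hsign⟩ := hΦ
  rcases eq_or_lt_of_le (ht.trans htw) with hwi | hwi
  · have : t = w i := le_antisymm htw (by linarith)
    rw [this, Function.update_eq_self]
  · set s : ℝ := t / w i with hs
    have hs0 : 0 ≤ s := div_nonneg ht hwi.le
    have hs1 : s ≤ 1 := (div_le_one hwi).2 htw
    set ε : Fin d → ℝ := fun j => if j = i then (-1:ℝ) else 1 with hε
    have hεval : ∀ j, ε j = 1 ∨ ε j = -1 := by
      intro j; by_cases h : j = i <;> simp [hε, h]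
    set w' : Fin d → ℝ := fun j => ε j * w j with hw'
    have key : Function.update w i t = ((1+s)/2) • w + ((1-s)/2) • w' := by
      funext j
      by_cases hj : j = i
      · subst hj
        simp only [Function.update_self, Pi.add_apply, Pi.smul_apply, smul_eq_mul, hw', hε,
          if_pos rfl]
        rw [if_pos trivial, hs]
        field_simp
        ring
      · simp only [Function.update_of_ne hj, Pi.add_apply, Pi.smul_apply, smul_eq_mul, hw', hε,
          if_neg hj]
        ring
    calc Φ (Function.update w i t) = Φ (((1+s)/2) • w + ((1-s)/2) • w') := by rw [key]
      _ ≤ Φ (((1+s)/2) • w) + Φ (((1-s)/2) • w') := htri _ _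
      _ = ((1+s)/2) * Φ w + ((1-s)/2) * Φ w' := by
          rw [hsmul, hsmul, abs_of_nonneg (by linarith), abs_of_nonneg (by linarith)]
      _ = Φ w := by rw [hsign ε hεval w]; ring

lemma sg_mono {d : ℕ} {Φ : (Fin d → ℝ) → ℝ} (hΦ : IsSymmetricGauge Φ)
    (u v : Fin d → ℝ) (hu : ∀ i, 0 ≤ u i) (huv : ∀ i, u i ≤ v i) : Φ u ≤ Φ v := by
  have main : ∀ s : Finset (Fin d), Φ (fun j => if j ∈ s then u j else v j) ≤ Φ v := by
    intro s
    induction s using Finset.induction with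
    | empty => simp
    | @insert i s hi ih =>
      have heq : (fun j => if j ∈ insert i s then u j else v j)
          = Function.update (fun j => if j ∈ s then u j else v j) i (u i) := by
        funext j
        by_cases hj : j = i
        · subst hj; simp
        · simp [Function.update_of_ne hj, Finset.mem_insert, hj]
      rw [heq]
      refine le_trans (sg_update hΦ _ i (u i) (hu i) ?_) ih
      simp [hi]
      exact huv i
  have := main Finset.univ
  simpa using this

lemma sg_young {d : ℕ} {Φ : (Fin d → ℝ) → ℝ} (hΦ : IsSymmetricGauge Φ)
    {p q : ℝ} (hpq : p.HolderConjugate q) (u w : Fin d → ℝ)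
    (hu : ∀ i, 0 ≤ u i) (hw : ∀ i, 0 ≤ w i) {t : ℝ} (ht : 0 < t) :
    Φ (fun i => u i * w i) ≤ t ^ p / p * Φ (fun i => u i ^ p)
      + t ^ (-q) / q * Φ (fun i => w i ^ q) := by
  obtain ⟨hpos, hzero, hsmul, htri, hperm, hsign⟩ := hΦ
  have hcoord : ∀ i, u i * w i ≤ t ^ p / p * u i ^ p + t ^ (-q) / q * w i ^ q := by
    intro i
    have h1 : u i * w i = (t * u i) * (w i / t) := by field_simp
    have h2 := Real.young_inequality_of_nonneg
      (mul_nonneg ht.le (hu i)) (div_nonneg (hw i) ht.le) hpq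
    rw [h1]
    refine h2.trans_eq ?_
    rw [Real.mul_rpow ht.le (hu i), Real.div_rpow (hw i) ht.le,
      Real.rpow_neg ht.le]
    field_simp
  have step1 : Φ (fun i => u i * w i)
      ≤ Φ (fun i => t ^ p / p * u i ^ p + t ^ (-q) / q * w i ^ q) :=
    sg_mono ⟨hpos, hzero, hsmul, htri, hperm, hsign⟩ _ _
      (fun i => mul_nonneg (hu i) (hw i)) hcoord
  refine step1.trans ?_
  have hsplit : (fun i => t ^ p / p * u i ^ p + t ^ (-q) / q * w i ^ q)
      = (t ^ p / p) • (fun i => u i ^ p) + (t ^ (-q) / q) • (fun i => w i ^ q) := by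
    funext i; simp [Pi.add_apply]
  rw [hsplit]
  refine (htri _ _).trans_eq ?_
  rw [hsmul, hsmul, abs_of_nonneg (div_nonneg (Real.rpow_nonneg ht.le _) hpq.nonneg),
    abs_of_nonneg (div_nonneg (Real.rpow_nonneg ht.le _) hpq.symm.nonneg)]

lemma sg_holder {d : ℕ} {Φ : (Fin d → ℝ) → ℝ} (hΦ : IsSymmetricGauge Φ)
    {p q : ℝ} (hpq : p.HolderConjugate q) (u w : Fin d → ℝ)
    (hu : ∀ i, 0 ≤ u i) (hw : ∀ i, 0 ≤ w i) :
    Φ (fun i => u i * w i)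
      ≤ (Φ (fun i => u i ^ p)) ^ (1/p) * (Φ (fun i => w i ^ q)) ^ (1/q) := by
  obtain ⟨hpos, hzero, hsmul, htri, hperm, hsign⟩ := id hΦ
  set A := Φ (fun i => u i ^ p) with hA
  set B := Φ (fun i => w i ^ q) with hB
  have hA0 : 0 ≤ A := hpos _
  have hB0 : 0 ≤ B := hpos _
  rcases eq_or_lt_of_le hA0 with hA' | hA'
  · -- A = 0, so u = 0
    have hu0 : ∀ i, u i = 0 := by
      intro i
      have := (hzero _).1 hA'.symm
      have hi := congrFun this i
      simpa [Real.rpow_eq_zero (hu i) hpq.ne_zero] using hi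
    have : (fun i => u i * w i) = (0 : Fin d → ℝ) := by
      funext i; simp [hu0 i]
    rw [this, (hzero 0).2 rfl]
    exact mul_nonneg (Real.rpow_nonneg hA0 _) (Real.rpow_nonneg hB0 _)
  rcases eq_or_lt_of_le hB0 with hB' | hB'
  · have hw0 : ∀ i, w i = 0 := by
      intro i
      have := (hzero _).1 hB'.symm
      have hi := congrFun this i
      simpa [Real.rpow_eq_zero (hw i) hpq.symm.ne_zero] using hi
    have : (fun i => u i * w i) = (0 : Fin d → ℝ) := by
      funext i; simp [hw0 i]
    rw [this, (hzero 0).2 rfl]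
    exact mul_nonneg (Real.rpow_nonneg hA0 _) (Real.rpow_nonneg hB0 _)
  -- main case A, B > 0
  set t : ℝ := (B / A) ^ (1 / (p * q)) with htdef
  have hBA : 0 < B / A := div_pos hB' hA'
  have ht : 0 < t := Real.rpow_pos_of_pos hBA _
  have key := sg_young hΦ hpq u w hu hw ht
  refine key.trans_eq ?_
  have hp0 : p ≠ 0 := hpq.ne_zero
  have hq0 : q ≠ 0 := hpq.symm.ne_zero
  have htp : t ^ p = B ^ (1/q) / A ^ (1/q) := by
    rw [htdef, ← Real.rpow_mul hBA.le,
      show 1/(p*q)*p = 1/q from by field_simp, Real.div_rpow hB0 hA0]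
  have htq : t ^ (-q) = A ^ (1/p) / B ^ (1/p) := by
    rw [htdef, ← Real.rpow_mul hBA.le,
      show 1/(p*q)*(-q) = -(1/p) from by field_simp,
      Real.rpow_neg hBA.le, Real.div_rpow hB0 hA0, inv_div]
  have hAq : A ^ (1/p) = A / A ^ (1/q) := by
    rw [show (1/p) = 1 - 1/q from by
        rw [one_div, one_div, ← hpq.inv_add_inv_eq_one]; ring,
      Real.rpow_sub hA', Real.rpow_one]
  have hBq : B ^ (1/q) = B / B ^ (1/p) := by
    rw [show (1/q) = 1 - 1/p from by
        rw [one_div, one_div, ← hpq.inv_add_inv_eq_one]; ring,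
      Real.rpow_sub hB', Real.rpow_one]
  have hAqpos : (0:ℝ) < A ^ (1/q) := Real.rpow_pos_of_pos hA' _
  have hBppos : (0:ℝ) < B ^ (1/p) := Real.rpow_pos_of_pos hB' _
  rw [← hA, ← hB, htp, htq, hAq, hBq]
  field_simp
  linear_combination (-1) * hpq.mul_eq_add

lemma sg_minkowski {d : ℕ} {Φ : (Fin d → ℝ) → ℝ} (hΦ : IsSymmetricGauge Φ)
    {p : ℝ} (hp : 1 ≤ p) (u v : Fin d → ℝ)
    (hu : ∀ i, 0 ≤ u i) (hv : ∀ i, 0 ≤ v i) :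
    (Φ (fun i => (u i + v i) ^ p)) ^ (1/p)
      ≤ (Φ (fun i => u i ^ p)) ^ (1/p) + (Φ (fun i => v i ^ p)) ^ (1/p) := by
  obtain ⟨hpos, hzero, hsmul, htri, hperm, hsign⟩ := id hΦ
  rcases eq_or_lt_of_le hp with hp1 | hp1
  · -- p = 1
    subst hp1
    simp only [Real.rpow_one, div_one]
    have he : (fun i => u i + v i) = u + v := rfl
    rw [he]; exact htri u v
  -- 1 < p
  have hpq := Real.HolderConjugate.conjExponent hp1
  set q := Real.conjExponent p with hqdef
  have hp0 : p ≠ 0 := hpq.ne_zero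
  have hq0 : q ≠ 0 := hpq.symm.ne_zero
  set S := Φ (fun i => (u i + v i) ^ p) with hS
  have hS0 : 0 ≤ S := hpos _
  rcases eq_or_lt_of_le hS0 with hS' | hS'
  · rw [← hS', Real.zero_rpow (one_div_ne_zero hp0)]
    exact add_nonneg (Real.rpow_nonneg (hpos _) _) (Real.rpow_nonneg (hpos _) _)
  -- S > 0
  have hw : ∀ i, 0 ≤ u i + v i := fun i => add_nonneg (hu i) (hv i)
  have hg : ∀ i, 0 ≤ (u i + v i) ^ (p - 1) := fun i => Real.rpow_nonneg (hw i) _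
  have hsplit : (fun i => (u i + v i) ^ p)
      = (fun i => u i * (u i + v i) ^ (p - 1)) + (fun i => v i * (u i + v i) ^ (p - 1)) := by
    funext i
    have : (u i + v i) ^ p = (u i + v i) * (u i + v i) ^ (p - 1) := by
      rw [show p = 1 + (p - 1) from by ring, Real.rpow_add' (hw i) (by ring_nf; exact hp0),
        Real.rpow_one]
      ring_nf
    simp only [Pi.add_apply]
    rw [this]; ring
  have hgq : (fun i => ((u i + v i) ^ (p - 1)) ^ q) = (fun i => (u i + v i) ^ p) := by
    funext i
    rw [← Real.rpow_mul (hw i), hpq.sub_one_mul_conj]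
  have h1 : Φ (fun i => u i * (u i + v i) ^ (p - 1))
      ≤ (Φ (fun i => u i ^ p)) ^ (1/p) * S ^ (1/q) := by
    have := sg_holder hΦ hpq u (fun i => (u i + v i) ^ (p - 1)) hu hg
    rwa [hgq, ← hS] at this
  have h2 : Φ (fun i => v i * (u i + v i) ^ (p - 1))
      ≤ (Φ (fun i => v i ^ p)) ^ (1/p) * S ^ (1/q) := by
    have := sg_holder hΦ hpq v (fun i => (u i + v i) ^ (p - 1)) hv hg
    rwa [hgq, ← hS] at this
  have hSle : S ≤ ((Φ (fun i => u i ^ p)) ^ (1/p) + (Φ (fun i => v i ^ p)) ^ (1/p)) * S ^ (1/q) := by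
    calc S = Φ ((fun i => u i * (u i + v i) ^ (p - 1)) + (fun i => v i * (u i + v i) ^ (p - 1))) := by
            rw [hS, hsplit]
      _ ≤ _ := htri _ _
      _ ≤ _ := add_le_add h1 h2
      _ = _ := by ring
  have hSq : 0 < S ^ (1/q) := Real.rpow_pos_of_pos hS' _
  have hSsplit : S = S ^ (1/p) * S ^ (1/q) := by
    rw [← Real.rpow_add hS', show 1/p + 1/q = 1 from by
      rw [one_div, one_div]; exact hpq.inv_add_inv_eq_one, Real.rpow_one]
  have hfin : S ^ (1/p) * S ^ (1/q)
      ≤ ((Φ (fun i => u i ^ p)) ^ (1/p) + (Φ (fun i => v i ^ p)) ^ (1/p)) * S ^ (1/q) := by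
    rw [← hSsplit]; exact hSle
  exact le_of_mul_le_mul_right hfin hSq

/-- The `ℓp`-transformation `Φ^(p)(x) = (Φ(|x₁|^p, …, |x_d|^p))^{1/p}`. -/
noncomputable def lpTransform {d : ℕ} (Φ : (Fin d → ℝ) → ℝ) (p : ℝ) :
    (Fin d → ℝ) → ℝ :=
  fun x => (Φ (fun i => |x i| ^ p)) ^ (1 / p)

theorem lpTransform_isSymmetricGauge {d : ℕ} (Φ : (Fin d → ℝ) → ℝ)
    (hΦ : IsSymmetricGauge Φ) (p : ℝ) (hp : 1 ≤ p) :
    IsSymmetricGauge (lpTransform Φ p) ∧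
      ∀ x y : Fin d → ℝ,
        lpTransform Φ p (x + y) ≤ lpTransform Φ p x + lpTransform Φ p y := by
  obtain ⟨hpos, hzero, hsmul, htri, hperm, hsign⟩ := id hΦ
  have hp0 : (0:ℝ) < p := lt_of_lt_of_le one_pos hp
  have hpne : p ≠ 0 := ne_of_gt hp0
  have htriangle : ∀ x y : Fin d → ℝ,
      lpTransform Φ p (x + y) ≤ lpTransform Φ p x + lpTransform Φ p y := by
    intro x y
    show (Φ fun i => |(x + y) i| ^ p) ^ (1/p)
        ≤ (Φ fun i => |x i| ^ p) ^ (1/p) + (Φ fun i => |y i| ^ p) ^ (1/p)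
    have mono1 : Φ (fun i => |(x + y) i| ^ p) ≤ Φ (fun i => (|x i| + |y i|) ^ p) :=
      sg_mono hΦ _ _ (fun i => Real.rpow_nonneg (abs_nonneg _) _)
        (fun i => Real.rpow_le_rpow (abs_nonneg _)
          (by simpa using abs_add_le (x i) (y i)) hp0.le)
    have step1 : Φ (fun i => |(x + y) i| ^ p) ^ (1/p)
        ≤ Φ (fun i => (|x i| + |y i|) ^ p) ^ (1/p) :=
      Real.rpow_le_rpow (hpos _) mono1 (by positivity)
    exact step1.trans (sg_minkowski hΦ hp (fun i => |x i|) (fun i => |y i|)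
      (fun i => abs_nonneg _) (fun i => abs_nonneg _))
  refine ⟨⟨?_, ?_, ?_, htriangle, ?_, ?_⟩, htriangle⟩
  · intro x
    exact Real.rpow_nonneg (hpos _) _
  · intro x
    show (Φ fun i => |x i| ^ p) ^ (1/p) = 0 ↔ x = 0
    rw [Real.rpow_eq_zero (hpos _) (one_div_ne_zero hpne), hzero]
    constructor
    · intro h
      funext i
      have hi := congrFun h i
      simp only [Pi.zero_apply] at hi ⊢
      have := (Real.rpow_eq_zero (abs_nonneg (x i)) hpne).1 hi
      exact abs_eq_zero.1 this
    · intro h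
      subst h
      funext i
      simp [Real.zero_rpow hpne]
  · intro a x
    show (Φ fun i => |(a • x) i| ^ p) ^ (1/p) = |a| * (Φ fun i => |x i| ^ p) ^ (1/p)
    have he : (fun i => |(a • x) i| ^ p) = (|a| ^ p) • (fun i => |x i| ^ p) := by
      funext i
      simp [Pi.smul_apply, smul_eq_mul, abs_mul,
        Real.mul_rpow (abs_nonneg a) (abs_nonneg (x i))]
    rw [he, hsmul, abs_of_nonneg (Real.rpow_nonneg (abs_nonneg a) p),
      Real.mul_rpow (Real.rpow_nonneg (abs_nonneg a) p) (hpos _),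
      ← Real.rpow_mul (abs_nonneg a), mul_one_div_cancel hpne, Real.rpow_one]
  · intro σ x
    show (Φ fun i => |(x ∘ σ) i| ^ p) ^ (1/p) = (Φ fun i => |x i| ^ p) ^ (1/p)
    have he : (fun i => |(x ∘ σ) i| ^ p) = (fun i => |x i| ^ p) ∘ σ := rfl
    rw [he, hperm]
  · intro ε hε x
    show (Φ fun i => |ε i * x i| ^ p) ^ (1/p) = (Φ fun i => |x i| ^ p) ^ (1/p)
    have he : (fun i => |ε i * x i| ^ p) = (fun i => |x i| ^ p) := by
      funext i
      have : |ε i| = 1 := by rcases hε i with h | h <;> simp [h]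
      rw [abs_mul, this, one_mul]
    rw [he]
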